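/- If x^η is a nice monomial for (G, e, M) in the sense that its coefficient in P_{G−e−M} is nonzero, η(v₁)=η(v₂)=0 for the endpoints v₁, v₂ of e, and η(v) ≤ 3 for all vertices, then the monomial x^{η''} with η''(v₁) = 1 and η'' = η elsewhere has nonzero coefficient in P_{G−M}, and hence AT(G − M) ≤ 4. -/

import Mathlib

open MvPolynomial Finset

/- The graph polynomial `P_G = ∏_{uv ∈ E(G), u < v} (x_v - x_u)`. -/
open scoped Classical in
noncomputable def graphPoly {V : Type*} [Fintype V] [LinearOrder V]
    (G : SimpleGraph V) : MvPolynomial V ℝ :=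
  ∏ p ∈ Finset.univ.filter (fun p : V × V => G.Adj p.1 p.2 ∧ p.1 < p.2),
    (X p.2 - X p.1)

/- The signed graph polynomial `P_{G,σ} = ∏_{uv ∈ E(G), u < v} (x_v - σ(uv)·x_u)`. -/
open scoped Classical in
noncomputable def signedGraphPoly {V : Type*} [Fintype V] [LinearOrder V]
    (G : SimpleGraph V) (σ : Sym2 V → ℤ) : MvPolynomial V ℤ :=
  ∏ p ∈ Finset.univ.filter (fun p : V × V => G.Adj p.1 p.2 ∧ p.1 < p.2),
    (X p.2 - C (σ s(p.1, p.2)) * X p.1)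

/- `H` is a minor of `G`: branch sets. -/
def SimpleGraph.IsMinor {W V : Type*} (H : SimpleGraph W) (G : SimpleGraph V) : Prop :=
  ∃ f : W → Set V,
    (∀ w, (G.induce (f w)).Connected) ∧
    (∀ w₁ w₂, w₁ ≠ w₂ → Disjoint (f w₁) (f w₂)) ∧
    (∀ w₁ w₂, H.Adj w₁ w₂ → ∃ v₁ ∈ f w₁, ∃ v₂ ∈ f w₂, G.Adj v₁ v₂)

/- A graph is planar iff it has no `K₅` and no `K₃,₃` minor (Wagner's theorem). -/
def SimpleGraph.IsPlanar {V : Type*} (G : SimpleGraph V) : Prop :=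
  ¬ SimpleGraph.IsMinor (completeGraph (Fin 5)) G ∧
  ¬ SimpleGraph.IsMinor (completeBipartiteGraph (Fin 3) (Fin 3)) G


/- From a nice monomial for `(G, e, M)` one obtains a non-vanishing monomial of
`P_{G-M}` with all exponents at most 3, hence `AT(G - M) ≤ 4`. -/
theorem stmt_19 {V : Type*} [Fintype V] [LinearOrder V] (G : SimpleGraph V)
    (v₁ v₂ : V) (he : G.Adj v₁ v₂)
    (M : G.Subgraph) (hM : M.IsMatching)
    (hv₁ : v₁ ∉ M.verts) (hv₂ : v₂ ∉ M.verts)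
    (η : V →₀ ℕ)
    (hc : MvPolynomial.coeff η
      (graphPoly ((G.deleteEdges M.edgeSet).deleteEdges {s(v₁, v₂)})) ≠ 0)
    (h1 : η v₁ = 0) (h2 : η v₂ = 0) (h3 : ∀ v, η v ≤ 3) :
    MvPolynomial.coeff (η + Finsupp.single v₁ 1)
        (graphPoly (G.deleteEdges M.edgeSet)) ≠ 0 ∧
      ∀ v, ((η + Finsupp.single v₁ 1 : V →₀ ℕ)) v < 4 := by
  classical
  set H₁ := G.deleteEdges M.edgeSet with hH₁
  set H₂ := H₁.deleteEdges {s(v₁, v₂)} with hH₂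
  have hne : v₁ ≠ v₂ := he.ne
  have hadj1 : H₁.Adj v₁ v₂ := by
    rw [hH₁, SimpleGraph.deleteEdges_adj]
    refine ⟨he, fun h => hv₁ ?_⟩
    exact M.edge_vert (SimpleGraph.Subgraph.mem_edgeSet.mp h)
  -- ordered endpoints
  obtain hlt | hlt := hne.lt_or_gt
  case' inl => set a := v₁ with ha; set b := v₂ with hb
  case' inr => set a := v₂ with ha; set b := v₁ with hb
  all_goals {
    have hab : a < b := hlt
    have hsab : s(a, b) = s(v₁, v₂) := by first | rfl | exact Sym2.eq_swap
    have hadjab : H₁.Adj a b := by first | exact hadj1 | exact hadj1.symm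
    have hset : (Finset.univ.filter (fun p : V × V => H₁.Adj p.1 p.2 ∧ p.1 < p.2))
        = insert (a, b) (Finset.univ.filter (fun p : V × V => H₂.Adj p.1 p.2 ∧ p.1 < p.2)) := by
      ext ⟨x, y⟩
      simp only [Finset.mem_filter, Finset.mem_univ, true_and, Finset.mem_insert,
        Prod.mk.injEq, hH₂, SimpleGraph.deleteEdges_adj, Set.mem_singleton_iff]
      constructor
      · rintro ⟨hxy, hlt'⟩
        by_cases hs : s(x, y) = s(v₁, v₂)
        · left
          rw [← hsab, Sym2.eq_iff] at hs
          rcases hs with ⟨rfl, rfl⟩ | ⟨rfl, rfl⟩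
          · exact ⟨rfl, rfl⟩
          · exact absurd hlt' (not_lt.mpr hab.le)
        · exact Or.inr ⟨⟨hxy, hs⟩, hlt'⟩
      · rintro (⟨rfl, rfl⟩ | ⟨⟨hxy, _⟩, hlt'⟩)
        · exact ⟨hadjab, hab⟩
        · exact ⟨hxy, hlt'⟩
    have hnotmem : (a, b) ∉ (Finset.univ.filter (fun p : V × V => H₂.Adj p.1 p.2 ∧ p.1 < p.2)) := by
      simp [hH₂, SimpleGraph.deleteEdges_adj, hsab, ha, hb]
    have hprod : graphPoly H₁ = (X b - X a) * graphPoly H₂ := by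
      rw [graphPoly, graphPoly]
      have := Finset.prod_insert hnotmem (f := fun p : V × V => (X p.2 - X p.1 : MvPolynomial V ℝ))
      rw [← hset] at this
      convert this
    rw [hprod, sub_mul, coeff_sub]
    constructor
    · have hone : (Finsupp.single v₁ 1 : V →₀ ℕ) v₂ = 0 :=
        Finsupp.single_eq_of_ne he.ne.symm
      have hsupp : v₂ ∉ (η + Finsupp.single v₁ 1).support := by
        simp only [Finsupp.mem_support_iff, Finsupp.add_apply, ne_eq, not_not]
        rw [h2, hone]
        rfl

      have hb0 : coeff (η + Finsupp.single v₁ 1) (X v₂ * graphPoly H₂) = 0 := by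
        rw [coeff_X_mul', if_neg hsupp]
      have hb1 : coeff (η + Finsupp.single v₁ 1) (X v₁ * graphPoly H₂) = coeff η (graphPoly H₂) := by
        rw [add_comm, coeff_X_mul]
      rw [ha, hb, hb0, hb1] <;> simpa using hc
    · intro v
      by_cases hv : v = v₁
      · subst hv; have h1' : η v = 0 := h1; simp [h1', ha, hb]
      · rw [Finsupp.add_apply, Finsupp.single_eq_of_ne hv, add_zero]
        exact lt_of_le_of_lt (h3 v) (by norm_num)
  }
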